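/- arXiv:1512.02527 — 2 statements merged into one kernel-verified Lean document; each statement's English description precedes it below -/
import Mathlib

section
/- Let B be a field of characteristic not 2, b an invertible n×n scalar matrix over B, and C = B[y, jor(y)^{-1}]/(y^2 − b), where y is an n×n matrix of indeterminates and jor(y) is the determinant of the Jordan multiplication z ↦ (zy+yz)/2. Then C has dimension 2 as a B-vector space. -/
open MvPolynomial

noncomputable section
set_option maxHeartbeats 1000000
set_option synthInstance.maxHeartbeats 400000

/-- `jor half b` : the determinant of the linear map `z ↦ half • (z*b + b*z)`
(Jordan multiplication by `b`, when `half` is the inverse of `2`). -/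
def jor {n : ℕ} {B : Type} [CommRing B] (half : B)
    (b : Matrix (Fin n) (Fin n) B) : B :=
  LinearMap.det (half • (LinearMap.mulLeft B b + LinearMap.mulRight B b))

/-- The generic `n × n` matrix `y` of indeterminates. -/
def Ymat (B : Type) [CommRing B] (n : ℕ) :
    Matrix (Fin n) (Fin n) (MvPolynomial (Fin n × Fin n) B) :=
  Matrix.of fun i j => X (i, j)

/-- `jor(y)` for the generic matrix of indeterminates. -/
def jorY (B : Type) [CommRing B] (half : B) (n : ℕ) : MvPolynomial (Fin n × Fin n) B :=
  jor (C half) (Ymat B n)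

/-- `B[y, jor(y)⁻¹]`. -/
abbrev Caway (B : Type) [CommRing B] (half : B) (n : ℕ) :=
  Localization.Away (jorY B half n)

/-- The ideal of `B[y, jor(y)⁻¹]` generated by the entries of `y² − b`. -/
def relIdeal (B : Type) [CommRing B] (half : B) (n : ℕ)
    (b : Matrix (Fin n) (Fin n) B) : Ideal (Caway B half n) :=
  Ideal.span (Set.range fun ij : Fin n × Fin n =>
    (((Ymat B n).map (algebraMap (MvPolynomial (Fin n × Fin n) B) (Caway B half n))) ^ 2
      - b.map (algebraMap B (Caway B half n))) ij.1 ij.2)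

/-- `C = B[y, jor(y)⁻¹]/(y² − b)`. -/
abbrev Cquot (B : Type) [CommRing B] (half : B) (n : ℕ)
    (b : Matrix (Fin n) (Fin n) B) :=
  Caway B half n ⧸ relIdeal B half n b

lemma my_stdBasis_repr {n : ℕ} {R : Type} [CommRing R] (m : Matrix (Fin n) (Fin n) R)
    (ij : Fin n × Fin n) :
    (Matrix.stdBasis R (Fin n) (Fin n)).repr m ij = m ij.1 ij.2 := by
  simp [Matrix.stdBasis, Module.Basis.repr]

lemma jor_map {n : ℕ} {R S : Type} [CommRing R] [CommRing S] (φ : R →+* S)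
    (h : R) (b : Matrix (Fin n) (Fin n) R) :
    φ (jor h b) = jor (φ h) (b.map φ) := by
  classical
  let bR := Matrix.stdBasis R (Fin n) (Fin n)
  let bS := Matrix.stdBasis S (Fin n) (Fin n)
  rw [jor, jor, ← LinearMap.det_toMatrix bR, ← LinearMap.det_toMatrix bS, RingHom.map_det]
  congr 1
  ext ⟨i, j⟩ ⟨k, l⟩
  simp only [RingHom.mapMatrix_apply, Matrix.map_apply, LinearMap.toMatrix_apply,
    Matrix.stdBasis_eq_single, LinearMap.smul_apply, LinearMap.add_apply,
    LinearMap.mulLeft_apply, LinearMap.mulRight_apply, my_stdBasis_repr, bR, bS]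
  simp [Matrix.smul_apply, Matrix.add_apply, Matrix.mul_apply, Matrix.single,
    Finset.mul_sum, map_sum, apply_ite φ, mul_comm]

lemma isUnit_of_det {n : ℕ} {S : Type} [CommRing S]
    (f : Module.End S (Matrix (Fin n) (Fin n) S))
    (hdet : IsUnit (LinearMap.det f)) : IsUnit f := by
  classical
  let b := Matrix.stdBasis S (Fin n) (Fin n)
  rw [← LinearMap.det_toMatrix b] at hdet
  have hM : IsUnit ((LinearMap.toMatrixAlgEquiv b) f) :=
    (Matrix.isUnit_iff_isUnit_det _).mpr hdet
  have h2 := hM.map (LinearMap.toMatrixAlgEquiv b).symm.toAlgHom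
  simpa using h2

lemma comm_of_jor_unit {n : ℕ} {S : Type} [CommRing S] (half lam mu : S)
    (Y : Matrix (Fin n) (Fin n) S) (hsq : Y * Y = lam • 1)
    (hlam : mu * lam = 1)
    (hjor : IsUnit (jor half Y)) :
    ∀ z : Matrix (Fin n) (Fin n) S, z * Y = Y * z := by
  classical
  set L : Module.End S (Matrix (Fin n) (Fin n) S) :=
    half • (LinearMap.mulLeft S Y + LinearMap.mulRight S Y) with hL
  have hLunit : IsUnit L := isUnit_of_det L hjor
  set M : Module.End S (Matrix (Fin n) (Fin n) S) :=
    half • (LinearMap.id + mu • (LinearMap.mulRight S Y ∘ₗ LinearMap.mulLeft S Y)) with hM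
  have key : ∀ z : Matrix (Fin n) (Fin n) S,
      (z + mu • (Y * z * Y)) * Y = Y * z + z * Y := by
    intro z
    have assoc : Y * z * Y * Y = Y * z * (Y * Y) := by noncomm_ring
    rw [Matrix.add_mul, Matrix.smul_mul, assoc, hsq,
      Matrix.mul_smul, Matrix.mul_one, smul_smul, hlam, one_smul, add_comm]
  have hLM : L = (LinearMap.mulRight S Y) * M := by
    refine LinearMap.ext fun z => ?_
    simp only [hL, hM, Module.End.mul_apply, LinearMap.smul_apply, LinearMap.add_apply,
      LinearMap.mulLeft_apply, LinearMap.mulRight_apply, LinearMap.id_apply,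
      LinearMap.comp_apply]
    rw [Matrix.smul_mul, key]
  have hRR : LinearMap.mulRight S Y * LinearMap.mulRight S (mu • Y) = 1 := by
    refine LinearMap.ext fun z => ?_
    simp only [Module.End.mul_apply, LinearMap.mulRight_apply, Module.End.one_apply]
    rw [Matrix.mul_smul, Matrix.smul_mul, Matrix.mul_assoc, hsq, Matrix.mul_smul,
      Matrix.mul_one, smul_smul, hlam, one_smul]
  have hRR' : LinearMap.mulRight S (mu • Y) * LinearMap.mulRight S Y = 1 := by
    refine LinearMap.ext fun z => ?_
    simp only [Module.End.mul_apply, LinearMap.mulRight_apply, Module.End.one_apply]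
    rw [Matrix.mul_smul, Matrix.mul_assoc, hsq, Matrix.mul_smul, Matrix.mul_one,
      smul_smul, hlam, one_smul]
  have hRunit : IsUnit (LinearMap.mulRight S Y) :=
    ⟨⟨LinearMap.mulRight S Y, LinearMap.mulRight S (mu • Y), hRR, hRR'⟩, rfl⟩
  have hMunit : IsUnit M := by
    obtain ⟨u, hu⟩ := hRunit
    have : M = (↑u⁻¹ : Module.End S _) * L := by
      rw [hLM, ← mul_assoc, ← hu, Units.inv_mul, one_mul]
    rw [this]
    exact (u⁻¹.isUnit).mul hLunit
  intro z
  have h1 : Y * (z * Y) * Y = lam • (Y * z) := by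
    have assoc : Y * (z * Y) * Y = Y * z * (Y * Y) := by noncomm_ring
    rw [assoc, hsq, Matrix.mul_smul, Matrix.mul_one]
  have h2 : Y * (Y * z) * Y = lam • (z * Y) := by
    have assoc : Y * (Y * z) * Y = Y * Y * (z * Y) := by noncomm_ring
    rw [assoc, hsq, Matrix.smul_mul, Matrix.one_mul]
  have hMz : M (z * Y - Y * z) = 0 := by
    simp only [hM, LinearMap.smul_apply, LinearMap.add_apply, LinearMap.id_apply,
      LinearMap.comp_apply, LinearMap.mulLeft_apply, LinearMap.mulRight_apply]
    rw [Matrix.mul_sub, Matrix.sub_mul, h1, h2, ← smul_sub, smul_smul, hlam, one_smul]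
    have : z * Y - Y * z + (Y * z - z * Y) = 0 := by abel
    rw [this, smul_zero]
  obtain ⟨u, hu⟩ := hMunit
  have h3 : (↑u⁻¹ : Module.End S _) (M (z * Y - Y * z)) = z * Y - Y * z := by
    rw [← hu, ← Module.End.mul_apply, Units.inv_mul, Module.End.one_apply]
  rw [hMz, map_zero] at h3
  exact sub_eq_zero.mp h3.symm

lemma scalar_of_comm {n : ℕ} {S : Type} [CommRing S] (hn : 0 < n)
    (Y : Matrix (Fin n) (Fin n) S) (hcomm : ∀ z : Matrix (Fin n) (Fin n) S, z * Y = Y * z)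
    (i j : Fin n) : Y i j = if i = j then Y ⟨0, hn⟩ ⟨0, hn⟩ else 0 := by
  classical
  split_ifs with h
  · subst h
    have := congrFun (congrFun (hcomm (Matrix.single i ⟨0, hn⟩ 1)) i) ⟨0, hn⟩
    rw [Matrix.single_mul_apply_same, Matrix.mul_single_apply_same,
      one_mul, mul_one] at this
    exact this.symm
  · have := congrFun (congrFun (hcomm (Matrix.single i i 1)) i) j
    rw [Matrix.single_mul_apply_same, one_mul,
      Matrix.mul_single_apply_of_ne (hbj := Ne.symm h)] at this
    exact this

lemma ite_eq_smul_one_entry {n : ℕ} {S : Type} [CommRing S] (t : S) (i j : Fin n) :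
    (if i = j then t else 0) = (t • (1 : Matrix (Fin n) (Fin n) S)) i j := by
  rw [Matrix.smul_apply, Matrix.one_apply]
  split_ifs <;> simp

lemma diag_sq {n : ℕ} {S : Type} [CommRing S] (hn : 0 < n) (t c : S)
    (h : (t • (1 : Matrix (Fin n) (Fin n) S)) * (t • 1) = c • 1) : t * t = c := by
  rw [smul_mul_smul_comm, one_mul] at h
  have h2 := congrFun (congrFun h ⟨0, hn⟩) ⟨0, hn⟩
  rwa [Matrix.smul_apply, Matrix.smul_apply, Matrix.one_apply_eq, smul_eq_mul,
    smul_eq_mul, mul_one, mul_one] at h2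

lemma map_sq_sub_entry {n : ℕ} {S T : Type} [CommRing S] [CommRing T] (f : S →+* T)
    (M N : Matrix (Fin n) (Fin n) S) (i j : Fin n) :
    f ((M ^ 2 - N) i j) = (((M.map f) ^ 2) - N.map f) i j := by
  rw [Matrix.sub_apply, map_sub, Matrix.sub_apply]
  congr 1
  have := congrFun (congrFun (map_pow (f.mapMatrix) M 2) i) j
  simpa [RingHom.mapMatrix_apply] using this

lemma isUnit_jor_smul_one {n : ℕ} {S : Type} [CommRing S] (h r : S) (hh : h * 2 = 1)
    (hr : IsUnit r) : IsUnit (jor h (r • (1 : Matrix (Fin n) (Fin n) S))) := by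
  have hLA : h • (LinearMap.mulLeft S (r • (1 : Matrix (Fin n) (Fin n) S))
      + LinearMap.mulRight S (r • (1 : Matrix (Fin n) (Fin n) S)))
      = algebraMap S (Module.End S (Matrix (Fin n) (Fin n) S)) r := by
    refine LinearMap.ext fun z => ?_
    rw [Module.algebraMap_end_eq_smul_id]
    simp only [LinearMap.smul_apply, LinearMap.add_apply, LinearMap.mulLeft_apply,
      LinearMap.mulRight_apply, LinearMap.id_apply]
    rw [Matrix.smul_mul, Matrix.one_mul, Matrix.mul_smul, Matrix.mul_one, ← add_smul,
      smul_smul]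
    congr 1
    rw [← two_mul, ← mul_assoc, hh, one_mul]
  rw [jor, hLA]
  exact (hr.map _).map LinearMap.det

lemma sq_sub_smul_one_entry {n : ℕ} {S : Type} [CommRing S] (r c : S) (hr : r ^ 2 = c)
    (i j : Fin n) :
    ((((r • (1 : Matrix (Fin n) (Fin n) S)) ^ 2) - c • (1 : Matrix (Fin n) (Fin n) S)
      : Matrix (Fin n) (Fin n) S)) i j = 0 := by
  rw [pow_two, smul_mul_smul_comm, one_mul, ← pow_two, hr, sub_self, Matrix.zero_apply]

lemma smul_one_map {n : ℕ} {S T : Type} [CommRing S] [CommRing T] (f : S →+* T) (c : S) :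
    ((c • (1 : Matrix (Fin n) (Fin n) S)).map f) = (f c) • (1 : Matrix (Fin n) (Fin n) T) := by
  ext i j
  rw [Matrix.map_apply, Matrix.smul_apply, Matrix.one_apply, Matrix.smul_apply,
    Matrix.one_apply]
  split_ifs <;> simp

lemma finrank_adjoinroot (B : Type) [Field B] (lam : B) :
    Module.finrank B (AdjoinRoot (Polynomial.X ^ 2 - Polynomial.C lam)) = 2 := by
  have hpoly0 : (Polynomial.X ^ 2 - Polynomial.C lam) ≠ 0 :=
    (Polynomial.monic_X_pow_sub_C _ (by norm_num)).ne_zero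
  rw [(AdjoinRoot.powerBasis hpoly0).finrank, AdjoinRoot.powerBasis_dim,
    Polynomial.natDegree_X_pow_sub_C]

/-- If `B` is a field of characteristic `≠ 2` and `b` is an invertible scalar matrix,
then `C = B[y, jor(y)⁻¹]/(y² − b)` has dimension `2` over `B`. -/
theorem stmt1 (B : Type) [Field B] (h2 : ringChar B ≠ 2) (n : ℕ) (hn : 0 < n)
    (lam : Bˣ) (b : Matrix (Fin n) (Fin n) B)
    (hb : b = (lam : B) • (1 : Matrix (Fin n) (Fin n) B)) :
    Module.finrank B (Cquot B (2 : B)⁻¹ n b) = 2 := by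
  classical
  have h20 : (2 : B) ≠ 0 := by
    intro h
    have hd : ringChar B ∣ 2 := by
      have := (ringChar.spec B 2)
      rw [Nat.cast_ofNat] at this
      exact this.mp h
    rcases (Nat.dvd_prime Nat.prime_two).mp hd with h1 | h1
    · exact CharP.ringChar_ne_one h1
    · exact h2 h1
  have hhalf2 : (2 : B)⁻¹ * 2 = 1 := inv_mul_cancel₀ h20
  set half : B := (2 : B)⁻¹ with hhalf
  let π : Caway B half n →+* Cquot B half n b := Ideal.Quotient.mk (relIdeal B half n b)
  let ρ : MvPolynomial (Fin n × Fin n) B →+* Cquot B half n b :=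
    π.comp (algebraMap (MvPolynomial (Fin n × Fin n) B) (Caway B half n))
  have hρalg : (algebraMap B (Cquot B half n b))
      = ρ.comp (algebraMap B (MvPolynomial (Fin n × Fin n) B)) := by
    rw [IsScalarTower.algebraMap_eq B (Caway B half n) (Cquot B half n b),
      IsScalarTower.algebraMap_eq B (MvPolynomial (Fin n × Fin n) B) (Caway B half n),
      Ideal.Quotient.algebraMap_eq, ← RingHom.comp_assoc]
  set Y : Matrix (Fin n) (Fin n) (Cquot B half n b) := (Ymat B n).map ρ with hY
  have hbmapGen : ∀ (T : Type) (_ : CommRing T) (f : B →+* T),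
      b.map f = (f (lam : B)) • 1 := by
    intro T instT f
    rw [hb]
    exact smul_one_map f (lam : B)
  have hbmapR : b.map (algebraMap B (Cquot B half n b))
      = (algebraMap B (Cquot B half n b) (lam : B)) • 1 :=
    hbmapGen _ _ (algebraMap B (Cquot B half n b))
  have hsq : Y * Y = (algebraMap B (Cquot B half n b) (lam : B)) • 1 := by
    have hgen : ∀ ij : Fin n × Fin n,
        π (((((Ymat B n).map (algebraMap (MvPolynomial (Fin n × Fin n) B)
            (Caway B half n))) ^ 2)
          - b.map (algebraMap B (Caway B half n))) ij.1 ij.2) = 0 := by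
      intro ij
      rw [Ideal.Quotient.eq_zero_iff_mem]
      exact Ideal.subset_span ⟨ij, rfl⟩
    rw [← hbmapR]
    rw [show Y * Y = Y ^ 2 from (pow_two Y).symm]
    ext i j
    have h := hgen (i, j)
    rw [map_sq_sub_entry] at h
    have e1 : ((Ymat B n).map (algebraMap (MvPolynomial (Fin n × Fin n) B)
        (Caway B half n))).map π = Y := by
      rw [hY, Matrix.map_map]
      rfl
    have e2 : (b.map (algebraMap B (Caway B half n))).map π
        = b.map (algebraMap B (Cquot B half n b)) := by
      rw [Matrix.map_map]
      ext i' j'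
      simp only [Matrix.map_apply, Function.comp_apply]
      rw [IsScalarTower.algebraMap_apply B (Caway B half n) (Cquot B half n b),
        Ideal.Quotient.algebraMap_eq]
    rw [e1, e2, Matrix.sub_apply, sub_eq_zero] at h
    exact h
  have hjor : IsUnit (jor (algebraMap B (Cquot B half n b) half) Y) := by
    have h1 : IsUnit (algebraMap (MvPolynomial (Fin n × Fin n) B) (Caway B half n)
        (jorY B half n)) :=
      IsLocalization.map_units (M := Submonoid.powers (jorY B half n)) (Caway B half n)
        ⟨jorY B half n, Submonoid.mem_powers _⟩
    have h2' : IsUnit (ρ (jorY B half n)) := h1.map π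
    have hc : ρ (C half) = algebraMap B (Cquot B half n b) half := by
      rw [hρalg]; rfl
    have hjoreq : ρ (jorY B half n) = jor (ρ (C half)) ((Ymat B n).map ρ) :=
      jor_map ρ (C half) (Ymat B n)
    rw [hc] at hjoreq
    exact hjoreq ▸ h2'
  have hlam : (algebraMap B (Cquot B half n b) ((lam⁻¹ : Bˣ) : B))
      * (algebraMap B (Cquot B half n b) (lam : B)) = 1 := by
    rw [← map_mul, Units.inv_mul, map_one]
  have hcomm := comm_of_jor_unit _ _ _ Y hsq hlam hjor
  have hscalar := scalar_of_comm hn Y hcomm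
  have hpoly0 : (Polynomial.X ^ 2 - Polynomial.C (lam : B)) ≠ 0 :=
    (Polynomial.monic_X_pow_sub_C _ (by norm_num)).ne_zero
  set r : AdjoinRoot (Polynomial.X ^ 2 - Polynomial.C (lam : B)) :=
    AdjoinRoot.root (Polynomial.X ^ 2 - Polynomial.C (lam : B)) with hr
  have hr2 : r ^ 2 = algebraMap B _ (lam : B) := by
    have h0 : Polynomial.aeval r (Polynomial.X ^ 2 - Polynomial.C (lam : B)) = 0 := by
      rw [AdjoinRoot.aeval_eq, AdjoinRoot.mk_self]
    rw [map_sub, map_pow, Polynomial.aeval_X, Polynomial.aeval_C, sub_eq_zero] at h0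
    exact h0
  have hrunit : IsUnit r := by
    refine IsUnit.of_mul_eq_one (a := r) (algebraMap B _ ((lam⁻¹ : Bˣ) : B) * r) ?_
    rw [show r * (algebraMap B _ ((lam⁻¹ : Bˣ) : B) * r)
        = algebraMap B _ ((lam⁻¹ : Bˣ) : B) * r ^ 2 by ring, hr2, ← map_mul,
      Units.inv_mul, map_one]
  set t : Cquot B half n b := ρ (X (⟨0, hn⟩, ⟨0, hn⟩)) with ht
  have htY : Y ⟨0, hn⟩ ⟨0, hn⟩ = t := rfl
  have hYs : Y = t • (1 : Matrix (Fin n) (Fin n) (Cquot B half n b)) := by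
    ext i j
    rw [hscalar i j, htY]
    exact ite_eq_smul_one_entry t i j
  have ht2 : t * t = algebraMap B (Cquot B half n b) (lam : B) := by
    rw [hYs] at hsq
    exact diag_sq hn t _ hsq
  have haevalt : Polynomial.aeval t (Polynomial.X ^ 2 - Polynomial.C (lam : B)) = 0 := by
    rw [map_sub, map_pow, Polynomial.aeval_X, Polynomial.aeval_C, pow_two, ht2, sub_self]
  set ψ : AdjoinRoot (Polynomial.X ^ 2 - Polynomial.C (lam : B)) →ₐ[B] Cquot B half n b :=
    AdjoinRoot.liftAlgHom (Polynomial.X ^ 2 - Polynomial.C (lam : B)) (Algebra.ofId B _) t haevalt with hψ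
  have hψr : ψ r = t :=
    AdjoinRoot.liftAlgHom_root (p := Polynomial.X ^ 2 - Polynomial.C (lam : B))
      (i := Algebra.ofId B _) (x := t) (h := haevalt)
  set φ₀ : MvPolynomial (Fin n × Fin n) B →ₐ[B]
      AdjoinRoot (Polynomial.X ^ 2 - Polynomial.C (lam : B)) :=
    aeval (fun ij : Fin n × Fin n => if ij.1 = ij.2 then r else 0) with hφ₀
  have hφ₀X : ∀ ij : Fin n × Fin n, φ₀ (X ij) = if ij.1 = ij.2 then r else 0 := by
    intro ij
    rw [hφ₀, aeval_X]
  have hφ₀C : ∀ c : B, φ₀ (C c) = algebraMap B _ c := by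
    intro c
    rw [hφ₀, aeval_C]
  have hY0 : (Ymat B n).map φ₀ = r • (1 : Matrix (Fin n) (Fin n)
      (AdjoinRoot (Polynomial.X ^ 2 - Polynomial.C (lam : B)))) := by
    ext i j
    rw [Matrix.map_apply, show Ymat B n i j = X (i, j) from rfl, hφ₀X]
    exact ite_eq_smul_one_entry r i j
  have h2A : (algebraMap B (AdjoinRoot (Polynomial.X ^ 2 - Polynomial.C (lam : B))) half)
      * 2 = 1 := by
    rw [show (2 : AdjoinRoot (Polynomial.X ^ 2 - Polynomial.C (lam : B)))
      = algebraMap B _ 2 by rw [map_ofNat], ← map_mul, hhalf, hhalf2, map_one]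
  have hjorA : IsUnit (φ₀ (jorY B half n)) := by
    have hu := isUnit_jor_smul_one (n := n) (algebraMap B
      (AdjoinRoot (Polynomial.X ^ 2 - Polynomial.C (lam : B))) half) r h2A hrunit
    have hjoreq : (φ₀ : MvPolynomial (Fin n × Fin n) B →+*
        AdjoinRoot (Polynomial.X ^ 2 - Polynomial.C (lam : B))) (jorY B half n)
        = jor ((φ₀ : MvPolynomial (Fin n × Fin n) B →+*
            AdjoinRoot (Polynomial.X ^ 2 - Polynomial.C (lam : B))) (C half))
          ((Ymat B n).map (φ₀ : MvPolynomial (Fin n × Fin n) B →+*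
            AdjoinRoot (Polynomial.X ^ 2 - Polynomial.C (lam : B)))) :=
      jor_map _ (C half) (Ymat B n)
    rw [show ((φ₀ : MvPolynomial (Fin n × Fin n) B →+*
        AdjoinRoot (Polynomial.X ^ 2 - Polynomial.C (lam : B))) (C half))
        = algebraMap B (AdjoinRoot (Polynomial.X ^ 2 - Polynomial.C (lam : B))) half from
      hφ₀C half] at hjoreq
    rw [show (Ymat B n).map (φ₀ : MvPolynomial (Fin n × Fin n) B →+*
        AdjoinRoot (Polynomial.X ^ 2 - Polynomial.C (lam : B)))
        = (Ymat B n).map φ₀ from rfl, hY0] at hjoreq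
    exact hjoreq ▸ hu
  set φ₁ : Caway B half n →+* AdjoinRoot (Polynomial.X ^ 2 - Polynomial.C (lam : B)) :=
    Localization.awayLift (φ₀ : _ →+* _) _ hjorA with hφ₁def
  have hφ₁ : ∀ p : MvPolynomial (Fin n × Fin n) B,
      φ₁ (algebraMap (MvPolynomial (Fin n × Fin n) B) (Caway B half n) p) = φ₀ p := fun p =>
    IsLocalization.Away.lift_eq _ hjorA p
  have hker : relIdeal B half n b ≤ RingHom.ker φ₁ := by
    rw [relIdeal, Ideal.span_le]
    rintro _ ⟨ij, rfl⟩
    have hmap : ((Ymat B n).map (algebraMap (MvPolynomial (Fin n × Fin n) B)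
        (Caway B half n))).map φ₁ = (Ymat B n).map φ₀ := by
      rw [Matrix.map_map]
      ext i j
      exact hφ₁ _
    have hbmap : (b.map (algebraMap B (Caway B half n))).map φ₁
        = b.map (algebraMap B (AdjoinRoot (Polynomial.X ^ 2 - Polynomial.C (lam : B)))) := by
      rw [Matrix.map_map]
      ext i j
      simp only [Matrix.map_apply, Function.comp_apply]
      rw [IsScalarTower.algebraMap_apply B (MvPolynomial (Fin n × Fin n) B) (Caway B half n),
        hφ₁]
      exact φ₀.commutes _
    have hbmapA : b.map (algebraMap B (AdjoinRoot (Polynomial.X ^ 2 - Polynomial.C (lam : B))))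
        = (algebraMap B (AdjoinRoot (Polynomial.X ^ 2 - Polynomial.C (lam : B))) (lam : B))
          • 1 := by
      exact hbmapGen _ _ (algebraMap B
        (AdjoinRoot (Polynomial.X ^ 2 - Polynomial.C (lam : B))))
    rw [SetLike.mem_coe, RingHom.mem_ker, map_sq_sub_entry, hmap, hbmap, hY0, hbmapA]
    exact sq_sub_smul_one_entry r _ hr2 ij.1 ij.2
  set φ₂ : Cquot B half n b →+* AdjoinRoot (Polynomial.X ^ 2 - Polynomial.C (lam : B)) :=
    Ideal.Quotient.lift (relIdeal B half n b) φ₁ (fun x hx => hker hx) with hφ₂def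
  have hφ₂π : ∀ x : Caway B half n, φ₂ (π x) = φ₁ x := fun x => Ideal.Quotient.lift_mk _ _ _
  have hcommutes : ∀ c : B, φ₂ (algebraMap B (Cquot B half n b) c)
      = algebraMap B (AdjoinRoot (Polynomial.X ^ 2 - Polynomial.C (lam : B))) c := by
    intro c
    rw [hρalg, RingHom.comp_apply, MvPolynomial.algebraMap_eq]
    rw [show ρ (C c) = π (algebraMap (MvPolynomial (Fin n × Fin n) B) (Caway B half n)
      (C c)) from rfl, hφ₂π, hφ₁]
    exact hφ₀C c
  set φ : Cquot B half n b →ₐ[B] AdjoinRoot (Polynomial.X ^ 2 - Polynomial.C (lam : B)) :=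
    { φ₂ with commutes' := hcommutes } with hφdef
  have hφρ : ∀ p : MvPolynomial (Fin n × Fin n) B, φ (ρ p) = φ₀ p := by
    intro p
    rw [show φ (ρ p) = φ₂ (π (algebraMap (MvPolynomial (Fin n × Fin n) B)
      (Caway B half n) p)) from rfl, hφ₂π, hφ₁]
  have e1 : φ.comp ψ = AlgHom.id B (AdjoinRoot (Polynomial.X ^ 2 - Polynomial.C (lam : B))) := by
    refine AdjoinRoot.algHom_ext ?_
    rw [AlgHom.comp_apply, AlgHom.id_apply]
    rw [show AdjoinRoot.root (Polynomial.X ^ 2 - Polynomial.C (lam : B)) = r from rfl]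
    rw [hψr, ht, hφρ, hφ₀X]
    rfl
  have e2 : ψ.comp φ = AlgHom.id B (Cquot B half n b) := by
    have hring : ((ψ.comp φ : Cquot B half n b →ₐ[B] Cquot B half n b) :
        Cquot B half n b →+* Cquot B half n b) = RingHom.id (Cquot B half n b) := by
      refine Ideal.Quotient.ringHom_ext ?_
      refine IsLocalization.ringHom_ext (Submonoid.powers (jorY B half n)) ?_
      refine MvPolynomial.ringHom_ext (fun c => ?_) (fun ij => ?_)
      · show ψ (φ (ρ (C c))) = ρ (C c)
        have hc : ρ (C c) = algebraMap B (Cquot B half n b) c := by rw [hρalg]; rfl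
        rw [hc, AlgHom.commutes, AlgHom.commutes]
      · show ψ (φ (ρ (X ij))) = ρ (X ij)
        rw [hφρ, hφ₀X]
        have hXij : ρ (X ij) = Y ij.1 ij.2 := rfl
        rw [hXij, hscalar ij.1 ij.2, htY]
        split_ifs with h
        · exact hψr
        · exact map_zero ψ
    exact AlgHom.ext fun x => RingHom.congr_fun hring x
  have equiv : AdjoinRoot (Polynomial.X ^ 2 - Polynomial.C (lam : B)) ≃ₐ[B]
      Cquot B half n b := AlgEquiv.ofAlgHom ψ φ e2 e1
  exact (equiv.symm.toLinearEquiv.finrank_eq).trans (finrank_adjoinroot B (lam : B))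
end
end

section
/- Let B be a commutative ring in which 2 is invertible and b ∈ GL_n(B). Then the B-algebra C = B[y, jor(y)^{-1}]/(y^2 − b) is formally étale over B: for any commutative B-algebra D and square-zero ideal I ⊆ D, any B-algebra map C → D/I lifts uniquely to a B-algebra map C → D. -/
open MvPolynomial

set_option maxHeartbeats 1000000

noncomputable section

namespace StmtAux

variable {n : ℕ} {R S : Type} [CommRing R] [CommRing S]

theorem stdBasis_apply' (q : Fin n × Fin n) :
    Matrix.stdBasis R (Fin n) (Fin n) q = Matrix.single q.1 q.2 1 := by
  obtain ⟨i, j⟩ := q; exact Matrix.stdBasis_eq_single R i j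

theorem stdBasis_repr (M : Matrix (Fin n) (Fin n) R) (p : Fin n × Fin n) :
    (Matrix.stdBasis R (Fin n) (Fin n)).repr M p = M p.1 p.2 := by
  have h : ∑ q : Fin n × Fin n, M q.1 q.2 • Matrix.stdBasis R (Fin n) (Fin n) q = M := by
    ext i j
    simp [stdBasis_apply', Matrix.sum_apply, Matrix.single, Fintype.sum_prod_type,
      ite_and, Finset.sum_ite_eq']
  conv_lhs => rw [← h]
  simp [Finsupp.single_apply, ← Prod.ext_iff]

theorem jor_map (φ : R →+* S) (h : R) (y : Matrix (Fin n) (Fin n) R) :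
    φ (jor h y) = jor (φ h) (y.map φ) := by
  set T := h • (LinearMap.mulLeft R y + LinearMap.mulRight R y) with hT
  set T' := (φ h) • (LinearMap.mulLeft S (y.map φ) + LinearMap.mulRight S (y.map φ)) with hT'
  rw [jor, jor, ← LinearMap.det_toMatrix (Matrix.stdBasis R (Fin n) (Fin n)) T,
    ← LinearMap.det_toMatrix (Matrix.stdBasis S (Fin n) (Fin n)) T', RingHom.map_det]
  congr 1
  ext p q
  simp only [Matrix.map_apply, RingHom.mapMatrix_apply, LinearMap.toMatrix_apply,
    stdBasis_repr, stdBasis_apply', hT, hT', LinearMap.smul_apply, LinearMap.add_apply,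
    LinearMap.mulLeft_apply, LinearMap.mulRight_apply, Matrix.smul_apply, Matrix.add_apply,
    Matrix.mul_apply, smul_eq_mul]
  simp [Matrix.single, apply_ite φ]

theorem isUnit_of_isUnit_mk {D : Type} [CommRing D] {I : Ideal D} (hI : I ^ 2 = ⊥)
    {x : D} (h : IsUnit (Ideal.Quotient.mk I x)) : IsUnit x := by
  obtain ⟨u, hu⟩ := h
  obtain ⟨v, hv⟩ := Ideal.Quotient.mk_surjective (↑u⁻¹ : D ⧸ I)
  have h1 : Ideal.Quotient.mk I (v * x) = 1 := by
    rw [map_mul, hv, ← hu]; exact u.inv_mul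
  have hm : v * x - 1 ∈ I := by
    rw [← Ideal.Quotient.eq_zero_iff_mem, map_sub, h1, map_one, sub_self]
  set m := v * x - 1 with hmdef
  have hm2 : m * m = 0 := by
    have : m * m ∈ I ^ 2 := by rw [pow_two]; exact Ideal.mul_mem_mul hm hm
    rwa [hI, Ideal.mem_bot] at this
  refine IsUnit.of_mul_eq_one (a := x) (v * (1 - m)) ?_
  have hvx : v * x = 1 + m := by rw [hmdef]; ring
  calc x * (v * (1 - m)) = (v * x) * (1 - m) := by ring
    _ = (1 + m) * (1 - m) := by rw [hvx]
    _ = 1 - m * m := by ring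
    _ = 1 := by rw [hm2, sub_zero]

theorem map_entries_mem {D : Type} [CommRing D] {I : Ideal D}
    (ℓ : Matrix (Fin n) (Fin n) D →ₗ[D] Matrix (Fin n) (Fin n) D)
    {M : Matrix (Fin n) (Fin n) D} (hM : ∀ i j, M i j ∈ I) (a c : Fin n) :
    ℓ M a c ∈ I := by
  rw [Matrix.matrix_eq_sum_single M]
  rw [map_sum, Matrix.sum_apply]
  refine Ideal.sum_mem _ fun i _ => ?_
  rw [map_sum, Matrix.sum_apply]
  refine Ideal.sum_mem _ fun j _ => ?_
  have : Matrix.single i j (M i j) = M i j • Matrix.single i j (1 : D) := by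
    rw [Matrix.smul_single, smul_eq_mul, mul_one]
  rw [this, map_smul, Matrix.smul_apply, smul_eq_mul]
  exact Ideal.mul_mem_right _ _ (hM i j)

theorem mul_entries_zero {D : Type} [CommRing D] {I : Ideal D} (hI : I ^ 2 = ⊥)
    {M N : Matrix (Fin n) (Fin n) D} (hM : ∀ i j, M i j ∈ I) (hN : ∀ i j, N i j ∈ I) :
    M * N = 0 := by
  ext i j
  rw [Matrix.mul_apply, Matrix.zero_apply]
  refine Finset.sum_eq_zero fun k _ => ?_
  have : M i k * N k j ∈ I ^ 2 := by
    rw [pow_two]; exact Ideal.mul_mem_mul (hM i k) (hN k j)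
  rwa [hI, Ideal.mem_bot] at this

theorem map_sq_sub {D E : Type} [CommRing D] [CommRing E] (φ : D →+* E)
    (M N : Matrix (Fin n) (Fin n) D) :
    (M ^ 2 - N).map φ = (M.map φ) ^ 2 - N.map φ := by
  ext i j
  simp [Matrix.sub_apply, pow_two, Matrix.mul_apply, Matrix.map_apply,
    map_sub, map_sum, map_mul]

/-- The invertible Jordan multiplication operator as a linear equivalence. -/
def jorEquiv {D : Type} [CommRing D] (h : D) (y : Matrix (Fin n) (Fin n) D)
    (hu : IsUnit (jor h y)) :
    Matrix (Fin n) (Fin n) D ≃ₗ[D] Matrix (Fin n) (Fin n) D :=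
  LinearEquiv.ofIsUnitDet (f := h • (LinearMap.mulLeft D y + LinearMap.mulRight D y))
    (v := Matrix.stdBasis D (Fin n) (Fin n)) (v' := Matrix.stdBasis D (Fin n) (Fin n))
    (by rw [LinearMap.det_toMatrix]; exact hu)

theorem jorEquiv_apply {D : Type} [CommRing D] (h : D) (y : Matrix (Fin n) (Fin n) D)
    (hu : IsUnit (jor h y)) (M : Matrix (Fin n) (Fin n) D) :
    jorEquiv h y hu M = h • (y * M + M * y) := by
  have h2 := LinearEquiv.coe_ofIsUnitDet
    (f := h • (LinearMap.mulLeft D y + LinearMap.mulRight D y))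
    (v := Matrix.stdBasis D (Fin n) (Fin n)) (v' := Matrix.stdBasis D (Fin n) (Fin n))
    (by rw [LinearMap.det_toMatrix]; exact hu)
  calc jorEquiv h y hu M
      = (h • (LinearMap.mulLeft D y + LinearMap.mulRight D y)) M := by
        rw [← h2]; rfl
    _ = h • (y * M + M * y) := by
        simp [LinearMap.smul_apply, LinearMap.add_apply]

end StmtAux

namespace StmtAux

section Core

variable (B : Type) [CommRing B] [Invertible (2 : B)] (n : ℕ) (b : Matrix (Fin n) (Fin n) B)
variable (R : Type) [CommRing R] [Algebra B R]

local notation "P" => MvPolynomial (Fin n × Fin n) B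
local notation "A" => Caway B (⅟(2 : B)) n
local notation "rel" => relIdeal B (⅟(2 : B)) n b
local notation "Cq" => Cquot B (⅟(2 : B)) n b

/-- The matrix of images of the variables under an algebra map out of `Cq`. -/
def toMat (f : Cq →ₐ[B] R) : Matrix (Fin n) (Fin n) R :=
  Matrix.of fun i j => f (Ideal.Quotient.mk rel (algebraMap P A (X (i, j))))

/-- The composite `P → A → Cq → R`. -/
def bigHom (f : Cq →ₐ[B] R) : MvPolynomial (Fin n × Fin n) B →ₐ[B] R :=
  (f.comp (Ideal.Quotient.mkₐ B rel)).comp (IsScalarTower.toAlgHom B P A)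

lemma bigHom_apply (f : Cq →ₐ[B] R) (p : P) :
    bigHom B n b R f p = f (Ideal.Quotient.mk rel (algebraMap P A p)) := by
  simp [bigHom, Ideal.Quotient.mkₐ_eq_mk]

lemma bigHom_X (f : Cq →ₐ[B] R) (i j : Fin n) :
    bigHom B n b R f (X (i, j)) = toMat B n b R f i j :=
  bigHom_apply B n b R f (X (i, j))

lemma Ymat_map_eq (ψ : MvPolynomial (Fin n × Fin n) B →ₐ[B] R) :
    (Ymat B n).map ψ = Matrix.of fun i j => ψ (X (i, j)) := rfl

/-- Evaluation of the entries of `y² − b` under an algebra map. -/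
lemma gen_eval (ψ : MvPolynomial (Fin n × Fin n) B →ₐ[B] R) (i j : Fin n) :
    ψ ((Ymat B n ^ 2 - b.map (algebraMap B P)) i j)
      = (((Ymat B n).map ψ) ^ 2 - b.map (algebraMap B R)) i j := by
  simp only [Matrix.sub_apply, pow_two, Matrix.mul_apply, Matrix.map_apply,
    map_sub, map_sum, map_mul]
  rw [ψ.commutes]

/-- The generators of `relIdeal` come from polynomials. -/
lemma gen_eq (i j : Fin n) :
    (((Ymat B n).map (algebraMap P A)) ^ 2 - b.map (algebraMap B A)) i j
      = algebraMap P A ((Ymat B n ^ 2 - b.map (algebraMap B P)) i j) := by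
  have := (gen_eval B n b A (IsScalarTower.toAlgHom B P A) i j).symm
  simpa [IsScalarTower.coe_toAlgHom'] using this

lemma toMat_sq (f : Cq →ₐ[B] R) :
    (toMat B n b R f) ^ 2 = b.map (algebraMap B R) := by
  ext i j
  have hmem : (((Ymat B n).map (algebraMap P A)) ^ 2 - b.map (algebraMap B A)) i j ∈ rel :=
    Ideal.subset_span ⟨(i, j), rfl⟩
  have h0 : f (Ideal.Quotient.mk rel
      ((((Ymat B n).map (algebraMap P A)) ^ 2 - b.map (algebraMap B A)) i j)) = 0 := by
    rw [Ideal.Quotient.eq_zero_iff_mem.mpr hmem, map_zero]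
  rw [gen_eq, ← bigHom_apply, gen_eval] at h0
  have h2 : (Ymat B n).map (bigHom B n b R f) = toMat B n b R f := by
    ext i' j'
    rfl
  rw [h2, Matrix.sub_apply] at h0
  exact sub_eq_zero.mp h0

lemma jor_bigHom (f : Cq →ₐ[B] R) :
    bigHom B n b R f (jorY B (⅟(2 : B)) n)
      = jor (algebraMap B R (⅟(2 : B))) (toMat B n b R f) := by
  rw [jorY, show (bigHom B n b R f (jor (C (⅟(2 : B))) (Ymat B n)))
      = (bigHom B n b R f).toRingHom (jor (C (⅟(2 : B))) (Ymat B n)) from rfl,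
    jor_map]
  have ha : (bigHom B n b R f).toRingHom (C (⅟(2 : B))) = algebraMap B R (⅟(2 : B)) :=
    algHom_C _ _
  have hm : (Ymat B n).map ⇑(bigHom B n b R f).toRingHom = toMat B n b R f := by
    ext i' j'
    rfl
  rw [ha, hm]

lemma toMat_jor_isUnit (f : Cq →ₐ[B] R) :
    IsUnit (jor (algebraMap B R (⅟(2 : B))) (toMat B n b R f)) := by
  rw [← jor_bigHom, bigHom_apply]
  exact (((IsLocalization.Away.algebraMap_isUnit (S := Caway B (⅟(2 : B)) n)
    (jorY B (⅟(2 : B)) n)).map (Ideal.Quotient.mk rel)).map f)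

lemma mk_algebraMap_C (r : B) :
    Ideal.Quotient.mk rel (algebraMap P A (C r)) = algebraMap B Cq r := by
  rw [← MvPolynomial.algebraMap_eq, ← IsScalarTower.algebraMap_apply,
    IsScalarTower.algebraMap_apply B A Cq, Ideal.Quotient.algebraMap_eq]

lemma toMat_injective {f g : Cq →ₐ[B] R}
    (h : toMat B n b R f = toMat B n b R g) : f = g := by
  have hP : (f.toRingHom.comp (Ideal.Quotient.mk rel)).comp
        (algebraMap P A)
      = (g.toRingHom.comp (Ideal.Quotient.mk rel)).comp (algebraMap P A) := by
    apply MvPolynomial.ringHom_ext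
    · intro r
      simp only [RingHom.comp_apply, mk_algebraMap_C]
      rw [show (f.toRingHom (algebraMap B Cq r) = f (algebraMap B Cq r)) from rfl,
        show (g.toRingHom (algebraMap B Cq r) = g (algebraMap B Cq r)) from rfl,
        f.commutes, g.commutes]
    · intro p
      have h1 := congrArg (fun M => M p.1 p.2) h
      exact h1
  have hA : f.toRingHom.comp (Ideal.Quotient.mk rel)
      = g.toRingHom.comp (Ideal.Quotient.mk rel) :=
    IsLocalization.ringHom_ext (Submonoid.powers (jorY B (⅟(2 : B)) n)) hP
  ext x
  obtain ⟨a, rfl⟩ := Ideal.Quotient.mk_surjective x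
  exact DFunLike.congr_fun hA a

/-- Evaluation at a matrix. -/
def evalHom (y : Matrix (Fin n) (Fin n) R) : MvPolynomial (Fin n × Fin n) B →ₐ[B] R :=
  aeval fun p => y p.1 p.2

lemma Ymat_map_evalHom (y : Matrix (Fin n) (Fin n) R) :
    (Ymat B n).map (evalHom B n R y) = y := by
  ext i j
  simp [Ymat, evalHom, Matrix.map_apply]

lemma evalHom_jorY (y : Matrix (Fin n) (Fin n) R) :
    evalHom B n R y (jorY B (⅟(2 : B)) n) = jor (algebraMap B R (⅟(2 : B))) y := by
  rw [jorY, show (evalHom B n R y (jor (C (⅟(2 : B))) (Ymat B n)))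
      = (evalHom B n R y).toRingHom (jor (C (⅟(2 : B))) (Ymat B n)) from rfl, jor_map]
  have ha : (evalHom B n R y).toRingHom (C (⅟(2 : B))) = algebraMap B R (⅟(2 : B)) :=
    algHom_C _ _
  have hm : (Ymat B n).map ⇑(evalHom B n R y).toRingHom = y := Ymat_map_evalHom B n R y
  rw [ha, hm]

variable {B n b R}

lemma evalHom_jorY_isUnit {y : Matrix (Fin n) (Fin n) R}
    (hu : IsUnit (jor (algebraMap B R (⅟(2 : B))) y)) :
    IsUnit ((evalHom B n R y).toRingHom (jorY B (⅟(2 : B)) n)) := by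
  rw [show ((evalHom B n R y).toRingHom (jorY B (⅟(2 : B)) n)
      = evalHom B n R y (jorY B (⅟(2 : B)) n)) from rfl, evalHom_jorY]
  exact hu

/-- The ring map `A → R` determined by a matrix `y` with invertible Jordan determinant. -/
def locRingHom (y : Matrix (Fin n) (Fin n) R)
    (hu : IsUnit (jor (algebraMap B R (⅟(2 : B))) y)) : A →+* R :=
  Localization.awayLift (evalHom B n R y).toRingHom (jorY B (⅟(2 : B)) n)
    (evalHom_jorY_isUnit hu)

lemma locRingHom_algebraMap (y : Matrix (Fin n) (Fin n) R)
    (hu : IsUnit (jor (algebraMap B R (⅟(2 : B))) y)) (p : P) :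
    locRingHom y hu (algebraMap P A p) = evalHom B n R y p :=
  IsLocalization.Away.lift_eq (jorY B (⅟(2 : B)) n) (evalHom_jorY_isUnit hu) p

/-- The algebra map `A → R` determined by a matrix `y` with invertible Jordan determinant. -/
def locHom (y : Matrix (Fin n) (Fin n) R)
    (hu : IsUnit (jor (algebraMap B R (⅟(2 : B))) y)) : A →ₐ[B] R where
  toRingHom := locRingHom y hu
  commutes' := by
    intro r
    show locRingHom y hu (algebraMap B A r) = algebraMap B R r
    rw [IsScalarTower.algebraMap_apply B P A, locRingHom_algebraMap]
    exact (evalHom B n R y).commutes r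

lemma locHom_algebraMap (y : Matrix (Fin n) (Fin n) R)
    (hu : IsUnit (jor (algebraMap B R (⅟(2 : B))) y)) (p : P) :
    locHom y hu (algebraMap P A p) = evalHom B n R y p :=
  locRingHom_algebraMap y hu p

/-- The algebra map `Cq → R` determined by a square root `y` of `b` with invertible
Jordan determinant. -/
def ofMat (y : Matrix (Fin n) (Fin n) R)
    (hsq : y ^ 2 = b.map (algebraMap B R))
    (hu : IsUnit (jor (algebraMap B R (⅟(2 : B))) y)) : Cq →ₐ[B] R :=
  Ideal.Quotient.liftₐ rel (locHom y hu) (by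
    intro a ha
    have hker : rel ≤ RingHom.ker (locHom y hu).toRingHom := by
      rw [relIdeal, Ideal.span_le]
      rintro _ ⟨ij, rfl⟩
      rw [SetLike.mem_coe, RingHom.mem_ker]
      rw [show ((locHom y hu).toRingHom
          ((((Ymat B n).map (algebraMap P A)) ^ 2 - b.map (algebraMap B A)) ij.1 ij.2)
        = locHom y hu
          ((((Ymat B n).map (algebraMap P A)) ^ 2 - b.map (algebraMap B A)) ij.1 ij.2))
        from rfl, gen_eq, locHom_algebraMap, gen_eval, Ymat_map_evalHom, hsq]
      simp
    show locHom y hu a = 0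
    exact hker ha)

lemma toMat_ofMat (y : Matrix (Fin n) (Fin n) R)
    (hsq : y ^ 2 = b.map (algebraMap B R))
    (hu : IsUnit (jor (algebraMap B R (⅟(2 : B))) y)) :
    toMat B n b R (ofMat y hsq hu) = y := by
  ext i j
  show ofMat y hsq hu (Ideal.Quotient.mk rel (algebraMap P A (X (i, j)))) = y i j
  show ((locHom y hu : A →ₐ[B] R) : A →+* R) (algebraMap P A (X (i, j))) = y i j
  rw [show (((locHom y hu : A →ₐ[B] R) : A →+* R) (algebraMap P A (X (i, j)))
    = locHom y hu (algebraMap P A (X (i, j)))) from rfl, locHom_algebraMap]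
  simp [evalHom]

end Core

end StmtAux

/-- For `B` a commutative ring with `2` invertible and `b ∈ GLₙ(B)`,
`C = B[y, jor(y)⁻¹]/(y² − b)` is formally étale over `B`: for every commutative
`B`-algebra `D` and square-zero ideal `I ⊆ D`, every `B`-algebra map `C → D/I`
lifts uniquely to a `B`-algebra map `C → D`. -/
theorem stmt3 (B : Type) [CommRing B] [Invertible (2 : B)] (n : ℕ)
    (b : Matrix (Fin n) (Fin n) B) (hb : IsUnit b)
    (D : Type) [CommRing D] [Algebra B D] (I : Ideal D) (hI : I ^ 2 = ⊥) :
    Function.Bijective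
      (fun f : Cquot B (⅟(2 : B)) n b →ₐ[B] D => (Ideal.Quotient.mkₐ B I).comp f) := by
  have hmkalg : ∀ x : B, Ideal.Quotient.mk I (algebraMap B D x) = algebraMap B (D ⧸ I) x := by
    intro x
    rw [IsScalarTower.algebraMap_apply B D (D ⧸ I), Ideal.Quotient.algebraMap_eq]
  constructor
  · -- injectivity
    intro f₁ f₂ hcomp
    set y₁ := StmtAux.toMat B n b D f₁ with hy₁
    set y₂ := StmtAux.toMat B n b D f₂ with hy₂
    have hmk : ∀ i j, Ideal.Quotient.mk I (y₁ i j) = Ideal.Quotient.mk I (y₂ i j) := by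
      intro i j
      have h := congrArg (fun F => StmtAux.toMat B n b (D ⧸ I) F i j) hcomp
      simpa [StmtAux.toMat, Ideal.Quotient.mkₐ_eq_mk, hy₁, hy₂] using h
    set δ := y₁ - y₂ with hδdef
    have hδ : ∀ i j, δ i j ∈ I := by
      intro i j
      have h := Ideal.Quotient.eq.mp (hmk i j)
      simpa [hδdef, Matrix.sub_apply] using h
    have hδδ : δ * δ = 0 := StmtAux.mul_entries_zero hI hδ hδ
    have h12 : y₁ * y₁ = y₂ * y₂ := by
      have e1 := StmtAux.toMat_sq B n b D f₁
      have e2 := StmtAux.toMat_sq B n b D f₂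
      rw [pow_two] at e1 e2
      rw [e1, e2]
    have hkey : y₂ * δ + δ * y₂ = 0 := by
      have hexp : y₂ * δ + δ * y₂ + δ * δ = y₁ * y₁ - y₂ * y₂ := by
        rw [hδdef]; noncomm_ring
      rw [h12, sub_self, hδδ, add_zero] at hexp
      exact hexp
    have h0 : StmtAux.jorEquiv (algebraMap B D (⅟(2 : B))) y₂
        (StmtAux.toMat_jor_isUnit B n b D f₂) δ = 0 := by
      rw [StmtAux.jorEquiv_apply, hkey, smul_zero]
    have hδ0 : δ = 0 := by
      have := (LinearEquiv.map_eq_zero_iff _).mp h0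
      exact this
    exact StmtAux.toMat_injective B n b D (sub_eq_zero.mp hδ0)
  · -- surjectivity
    intro g
    set ybar := StmtAux.toMat B n b (D ⧸ I) g with hybar
    choose y₀f hy₀f using fun i j => Ideal.Quotient.mk_surjective (I := I) (ybar i j)
    set y₀ : Matrix (Fin n) (Fin n) D := Matrix.of y₀f with hy₀
    have h₀ : y₀.map (Ideal.Quotient.mk I) = ybar := by
      ext i j; exact hy₀f i j
    set e0 := y₀ ^ 2 - b.map (algebraMap B D) with he0
    have hbmap : (b.map (algebraMap B D)).map (Ideal.Quotient.mk I)
        = b.map (algebraMap B (D ⧸ I)) := by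
      ext i j
      simp [Matrix.map_apply, hmkalg]
    have hbarmap : e0.map (Ideal.Quotient.mk I) = 0 := by
      rw [he0, StmtAux.map_sq_sub, h₀, hbmap,
        show ybar ^ 2 = b.map (algebraMap B (D ⧸ I)) from StmtAux.toMat_sq B n b (D ⧸ I) g,
        sub_self]
    have he : ∀ i j, e0 i j ∈ I := by
      intro i j
      rw [← Ideal.Quotient.eq_zero_iff_mem]
      have h := congrArg (fun M => M i j) hbarmap
      simpa [Matrix.map_apply] using h
    have hdet0 : IsUnit (jor (algebraMap B D (⅟(2 : B))) y₀) := by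
      apply StmtAux.isUnit_of_isUnit_mk hI
      have h := StmtAux.jor_map (Ideal.Quotient.mk I) (algebraMap B D (⅟(2 : B))) y₀
      rw [h, h₀, hmkalg]
      exact StmtAux.toMat_jor_isUnit B n b (D ⧸ I) g
    set eq0 := StmtAux.jorEquiv (algebraMap B D (⅟(2 : B))) y₀ hdet0 with heq
    set δ := -(eq0.symm ((algebraMap B D (⅟(2 : B))) • e0)) with hδdef
    have hδI : ∀ i j, δ i j ∈ I := by
      intro i j
      rw [hδdef, Matrix.neg_apply]
      refine neg_mem ?_
      refine StmtAux.map_entries_mem (eq0.symm : _ →ₗ[D] _) ?_ i j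
      intro a c
      rw [Matrix.smul_apply, smul_eq_mul]
      exact Ideal.mul_mem_left _ _ (he a c)
    have hTδ : (algebraMap B D (⅟(2 : B))) • (y₀ * δ + δ * y₀)
        = -((algebraMap B D (⅟(2 : B))) • e0) := by
      have h1 : eq0 δ = -((algebraMap B D (⅟(2 : B))) • e0) := by
        rw [hδdef, map_neg, eq0.apply_symm_apply]
      rw [heq, StmtAux.jorEquiv_apply] at h1
      exact h1
    have h2h : (2 : D) * algebraMap B D (⅟(2 : B)) = 1 := by
      rw [show ((2 : D) = algebraMap B D 2) from (map_ofNat (algebraMap B D) 2).symm,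
        ← map_mul, mul_invOf_self, map_one]
    have hhalf : IsUnit (algebraMap B D (⅟(2 : B))) :=
      IsUnit.of_mul_eq_one (2 : D) (by rw [mul_comm]; exact h2h)
    have hcross : y₀ * δ + δ * y₀ = -e0 := by
      refine hhalf.smul_left_cancel.mp ?_
      rw [hTδ, smul_neg]
    set y := y₀ + δ with hy
    have hδδ : δ * δ = 0 := StmtAux.mul_entries_zero hI hδI hδI
    have hsqy : y ^ 2 = b.map (algebraMap B D) := by
      have hexp : y ^ 2 = y₀ ^ 2 + (y₀ * δ + δ * y₀) + δ * δ := by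
        rw [hy]; noncomm_ring
      rw [hexp, hcross, hδδ, add_zero, he0]
      abel
    have hmapy : y.map (Ideal.Quotient.mk I) = ybar := by
      ext i j
      rw [hy, Matrix.map_apply, Matrix.add_apply, map_add,
        Ideal.Quotient.eq_zero_iff_mem.mpr (hδI i j), add_zero]
      exact hy₀f i j
    have hjory : IsUnit (jor (algebraMap B D (⅟(2 : B))) y) := by
      apply StmtAux.isUnit_of_isUnit_mk hI
      rw [StmtAux.jor_map (Ideal.Quotient.mk I), hmapy, hmkalg]
      exact StmtAux.toMat_jor_isUnit B n b (D ⧸ I) g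
    refine ⟨StmtAux.ofMat y hsqy hjory, ?_⟩
    apply StmtAux.toMat_injective B n b (D ⧸ I)
    have hcompMat : StmtAux.toMat B n b (D ⧸ I)
          ((Ideal.Quotient.mkₐ B I).comp (StmtAux.ofMat y hsqy hjory))
        = (StmtAux.toMat B n b D (StmtAux.ofMat y hsqy hjory)).map (Ideal.Quotient.mk I) := by
      ext i j
      simp [StmtAux.toMat, Ideal.Quotient.mkₐ_eq_mk, Matrix.map_apply]
    rw [hcompMat, StmtAux.toMat_ofMat, hmapy]
end
end
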